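/- Let A, B ∈ ℝ^{m×n} have full column rank, and suppose the columns of Z = [(Z^A)ᵀ, (Z^B)ᵀ]ᵀ ∈ ℝ^{2n×l} form a basis for the null space of the concatenated matrix [A, B] ∈ ℝ^{m×2n}, where Z^A, Z^B ∈ ℝ^{n×l}. Then the range of A Z^A equals the intersection of the range of A and the range of B. -/

import Mathlib

open Matrix

/-- If `A, B ∈ ℝ^{m×n}` have full column rank and the columns of
`Z = [(Z^A)ᵀ, (Z^B)ᵀ]ᵀ` form a basis of the null space of `[A, B]`, then
`range(A Z^A) = range(A) ∩ range(B)`. -/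
theorem stmt_5 (m n l : ℕ) (A B : Matrix (Fin m) (Fin n) ℝ)
    (hA : A.rank = n) (hB : B.rank = n)
    (ZA ZB : Matrix (Fin n) (Fin l) ℝ)
    (hindep : Function.Injective (Matrix.fromRows ZA ZB).mulVecLin)
    (hspan : LinearMap.range (Matrix.fromRows ZA ZB).mulVecLin =
      LinearMap.ker (Matrix.fromCols A B).mulVecLin) :
    LinearMap.range (A * ZA).mulVecLin =
      LinearMap.range A.mulVecLin ⊓ LinearMap.range B.mulVecLin := by
  apply le_antisymm
  · rintro y ⟨x, rfl⟩
    have hz : (fromCols A B).mulVecLin ((fromRows ZA ZB).mulVecLin x) = 0 := by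
      have hmem : (fromRows ZA ZB).mulVecLin x ∈
          LinearMap.ker (fromCols A B).mulVecLin := by
        rw [← hspan]; exact ⟨x, rfl⟩
      exact hmem
    simp only [mulVecLin_apply, fromRows_mulVec, fromCols_mulVec_sumElim] at hz
    constructor
    · exact ⟨ZA *ᵥ x, by simp [mulVecLin_apply, ← mulVec_mulVec]⟩
    · refine ⟨-(ZB *ᵥ x), ?_⟩
      simp only [mulVecLin_apply, mulVec_neg, ← mulVec_mulVec]
      rw [neg_eq_of_add_eq_zero_left hz]
  · rintro y ⟨⟨u, hu⟩, ⟨v, hv⟩⟩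
    have hw : Sum.elim u (-v) ∈ LinearMap.ker (fromCols A B).mulVecLin := by
      simp only [LinearMap.mem_ker, mulVecLin_apply, fromCols_mulVec_sumElim,
        mulVec_neg]
      simp only [mulVecLin_apply] at hu hv
      rw [hu, hv]; abel
    rw [← hspan] at hw
    obtain ⟨x, hx⟩ := hw
    simp only [mulVecLin_apply, fromRows_mulVec] at hx
    have hZA : ZA *ᵥ x = u := by
      have := congrFun hx
      exact funext fun i => this (Sum.inl i)
    refine ⟨x, ?_⟩
    simp only [mulVecLin_apply, ← mulVec_mulVec, hZA]
    simpa [mulVecLin_apply] using hu
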